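/- arXiv:2108.12997 — 2 statements merged into one kernel-verified Lean document; each statement's English description precedes it below -/
import Mathlib

section
/- For every n ≥ 2, the sawtooth function g_n on [0,π] (defined by g_n(2kπ/(2n+3)) = (−1)^k for 0 ≤ k ≤ n+1, g_n(π) = 0, and piecewise linear in between) satisfies g_n(θ)·cos((n+3/2)θ) ≥ g_n(θ)² ≥ 0 for all θ in each interval I_k = [2kπ/(2n+3), 2(k+1)π/(2n+3)], k ∈ {0,…,n}. -/
open Real

/-- The sawtooth function `g_n` on `[0, π]`: piecewise linear with value `(-1)^k`
at the node `2kπ/(2n+3)` for `0 ≤ k ≤ n+1`, and value `0` at `π`. -/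
noncomputable def sawtooth (n : ℕ) (θ : ℝ) : ℝ :=
  if θ ≤ (n + 1) * (2 * Real.pi / (2 * n + 3)) then
    (-1 : ℝ) ^ ⌊θ / (2 * Real.pi / (2 * n + 3))⌋ *
      (1 - 2 * (θ / (2 * Real.pi / (2 * n + 3)) - ⌊θ / (2 * Real.pi / (2 * n + 3))⌋))
  else (-1 : ℝ) ^ (n + 1) * ((Real.pi - θ) / (Real.pi / (2 * n + 3)))

lemma key_ineq {u : ℝ} (h0 : -1 ≤ u) (h1 : u ≤ 1) :
    u * Real.sin (Real.pi / 2 * u) ≥ u ^ 2 := by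
  rcases le_or_gt 0 u with hu | hu
  · have := Real.le_sin_mul hu h1
    nlinarith
  · have := Real.le_sin_mul (by linarith : (0:ℝ) ≤ -u) (by linarith)
    rw [mul_neg, Real.sin_neg] at this
    nlinarith

theorem sawtooth_mul_cos_ge_sq (n : ℕ) (hn : 2 ≤ n) (k : ℕ) (hk : k ≤ n) (θ : ℝ)
    (hθ : θ ∈ Set.Icc (2 * k * Real.pi / (2 * n + 3)) (2 * (k + 1) * Real.pi / (2 * n + 3))) :
    sawtooth n θ * Real.cos ((n + 3 / 2) * θ) ≥ sawtooth n θ ^ 2 ∧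
      sawtooth n θ ^ 2 ≥ 0 := by
  have hL : (0:ℝ) < 2 * n + 3 := by positivity
  set c : ℝ := 2 * Real.pi / (2 * n + 3) with hc
  have hcpos : 0 < c := by positivity
  obtain ⟨hθ1, hθ2⟩ := hθ
  have e1 : 2 * (k:ℝ) * Real.pi / (2 * n + 3) = (k:ℝ) * c := by rw [hc]; ring
  have e2 : 2 * ((k:ℝ) + 1) * Real.pi / (2 * n + 3) = ((k:ℝ) + 1) * c := by rw [hc]; ring
  have hθ1' : (k : ℝ) * c ≤ θ := e1 ▸ hθ1
  have hθ2' : θ ≤ ((k : ℝ) + 1) * c := e2 ▸ hθ2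
  set s : ℝ := θ / c - k with hs
  have hs0 : 0 ≤ s := by
    rw [hs, sub_nonneg, le_div_iff₀ hcpos]; linarith
  have hs1 : s ≤ 1 := by
    rw [hs, sub_le_iff_le_add, div_le_iff₀ hcpos]; linarith
  have hθeq : θ = ((k : ℝ) + s) * c := by
    rw [hs]; field_simp; ring
  -- value of the sawtooth
  have hbranch : θ ≤ ((n : ℝ) + 1) * c := by
    have h1 : ((k : ℝ) + 1) ≤ (n : ℝ) + 1 := by
      have : (k:ℝ) ≤ n := by exact_mod_cast hk
      linarith
    calc θ ≤ ((k : ℝ) + 1) * c := hθ2'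
      _ ≤ ((n : ℝ) + 1) * c := by nlinarith
  have hval : sawtooth n θ = (-1 : ℝ) ^ k * (1 - 2 * s) := by
    rw [sawtooth, if_pos hbranch, ← hc]
    rcases lt_or_eq_of_le hs1 with h | h
    · have hfl : ⌊θ / c⌋ = (k : ℤ) := by
        rw [Int.floor_eq_iff]
        constructor
        · push_cast; rw [le_div_iff₀ hcpos]; linarith
        · push_cast
          have hdc : θ / c = (k : ℝ) + s := by rw [hs]; ring
          rw [hdc]; linarith
      rw [hfl, zpow_natCast, hs]
      push_cast
      ring
    · have hθc : θ / c = (k : ℝ) + 1 := by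
        rw [hs] at h; linarith
      have hfl : ⌊θ / c⌋ = (k : ℤ) + 1 := by
        rw [hθc]
        rw [show ((k:ℝ) + 1) = (((k:ℤ) + 1 : ℤ) : ℝ) by push_cast; ring]
        exact Int.floor_intCast _
      rw [hfl, hθc, ← h]
      rw [show ((k:ℤ) + 1) = ((k + 1 : ℕ) : ℤ) by push_cast; ring, zpow_natCast,
        pow_succ]
      push_cast
      rw [h]
      ring
  -- value of the cosine
  have hcos : Real.cos ((n + 3 / 2) * θ) = (-1 : ℝ) ^ k * Real.cos (Real.pi * s) := by
    have harg : ((n : ℝ) + 3 / 2) * θ = Real.pi * s + k * Real.pi := by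
      rw [hθeq, hc]; field_simp; ring
    rw [harg, Real.cos_add_nat_mul_pi]
  rw [hval, hcos]
  constructor
  · have hsq : ((-1 : ℝ) ^ k) ^ 2 = 1 := by
      rw [← pow_mul, mul_comm, pow_mul]; norm_num
    have key : (1 - 2 * s) * Real.cos (Real.pi * s) ≥ (1 - 2 * s) ^ 2 := by
      have hcs : Real.cos (Real.pi * s) = Real.sin (Real.pi / 2 * (1 - 2 * s)) := by
        rw [← Real.cos_pi_div_two_sub]; ring_nf
      rw [hcs]
      exact key_ineq (by linarith) (by linarith)
    calc (-1:ℝ) ^ k * (1 - 2 * s) * ((-1:ℝ) ^ k * Real.cos (Real.pi * s))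
        = ((-1:ℝ) ^ k) ^ 2 * ((1 - 2 * s) * Real.cos (Real.pi * s)) := by ring
      _ = (1 - 2 * s) * Real.cos (Real.pi * s) := by rw [hsq]; ring
      _ ≥ (1 - 2 * s) ^ 2 := key
      _ = ((-1:ℝ) ^ k * (1 - 2 * s)) ^ 2 := by rw [mul_pow, hsq]; ring
  · positivity
end

section
/- For n ≥ 2 and 0 ≤ k ≤ n, ∫_{I_k} g_n(θ)·cos((n+3/2)θ)·cos(θ/2) dθ ≥ (2π/(3(2n+3)))·cos((k+1)π/(2n+3)), where I_k = [2kπ/(2n+3), 2(k+1)π/(2n+3)] and g_n is the sawtooth function defined above. -/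
open Real intervalIntegral

private lemma saw_key {t : ℝ} (h0 : 0 ≤ t) (h1 : t ≤ 1) :
    (1 - 2*t)^2 ≤ (1 - 2*t) * Real.cos (t * Real.pi) := by
  have hπ := Real.pi_pos
  rcases le_or_gt t (1/2) with h | h
  · have hc := Real.one_sub_mul_le_cos (x := t * π) (by positivity) (by nlinarith)
    have h2 : (1:ℝ) - 2*t ≤ Real.cos (t*π) := by
      have he : 2 / π * (t * π) = 2 * t := by field_simp
      linarith [he.symm ▸ hc]
    nlinarith
  · have hrw : Real.cos (t*π) = -Real.cos ((1-t) * π) := by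
      rw [← Real.cos_pi_sub]; ring_nf
    have hc := Real.one_sub_mul_le_cos (x := (1-t) * π) (by nlinarith) (by nlinarith)
    have h2 : (1:ℝ) - 2*(1-t) ≤ Real.cos ((1-t)*π) := by
      have he : 2 / π * ((1-t) * π) = 2 * (1-t) := by field_simp
      linarith [he.symm ▸ hc]
    rw [hrw]; nlinarith

private lemma saw_integral_sq {h : ℝ} (hh : 0 < h) (c : ℝ) :
    ∫ θ in (c*h)..((c+1)*h), (1 - 2*(θ/h - c))^2 = h/3 := by
  have e : ∀ θ : ℝ, (1 - 2*(θ/h - c))^2 = (fun u => (1 - 2*(u/h))^2) (θ - c*h) := by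
    intro θ
    simp only
    congr 1
    field_simp
  simp_rw [e]
  rw [intervalIntegral.integral_comp_sub_right (fun u => (1 - 2*(u/h))^2) (c*h)]
  have e1 : c*h - c*h = 0 := by ring
  have e2 : (c+1)*h - c*h = h := by ring
  rw [e1, e2]
  have e3 : ∀ u : ℝ, (1 - 2*(u/h))^2 = (4/h^2) * u^2 - (4/h) * u + 1 := by
    intro u; field_simp; ring
  simp_rw [e3]
  rw [intervalIntegral.integral_add (by apply Continuous.intervalIntegrable; fun_prop)
      (by apply Continuous.intervalIntegrable; fun_prop),
    intervalIntegral.integral_sub (by apply Continuous.intervalIntegrable; fun_prop)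
      (by apply Continuous.intervalIntegrable; fun_prop),
    intervalIntegral.integral_const_mul, intervalIntegral.integral_const_mul,
    integral_id, intervalIntegral.integral_const, integral_pow]
  field_simp
  ring

private lemma sawtooth_eq (n k : ℕ) (hk : k ≤ n) {θ : ℝ}
    (h1 : (k:ℝ) * (2*π/(2*(n:ℝ)+3)) ≤ θ) (h2 : θ ≤ ((k:ℝ)+1) * (2*π/(2*(n:ℝ)+3))) :
    sawtooth n θ = (-1:ℝ)^k * (1 - 2*(θ/(2*π/(2*(n:ℝ)+3)) - k)) := by
  have hπ := Real.pi_pos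
  have hN0 : (0:ℝ) < 2*(n:ℝ)+3 := by positivity
  have hh : (0:ℝ) < 2*π/(2*(n:ℝ)+3) := by positivity
  have hknl : (k:ℝ) ≤ (n:ℝ) := Nat.cast_le.mpr hk
  have hcond : θ ≤ ((n:ℝ)+1) * (2*π/(2*(n:ℝ)+3)) := by
    refine h2.trans ?_
    nlinarith
  unfold sawtooth
  rw [if_pos (by push_cast; exact hcond)]
  rcases eq_or_lt_of_le h2 with heq | hlt
  · have hv : θ / (2*π/(2*(n:ℝ)+3)) = (k:ℝ)+1 := by
      rw [heq]; field_simp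
    rw [hv]
    have : ((k:ℝ)+1) = ((k+1 : ℕ) : ℝ) := by push_cast; ring
    rw [this, Int.floor_natCast, zpow_natCast, pow_succ]
    push_cast
    ring
  · have hf : ⌊θ / (2*π/(2*(n:ℝ)+3))⌋ = (k:ℤ) := by
      rw [Int.floor_eq_iff]
      constructor
      · push_cast
        rw [le_div_iff₀ hh]
        exact h1
      · push_cast
        rw [div_lt_iff₀ hh]
        exact hlt
    rw [hf]
    push_cast [zpow_natCast]
    ring

set_option maxHeartbeats 1000000 in
theorem sawtooth_cos_integral_lower_bound (n : ℕ) (hn : 2 ≤ n) (k : ℕ) (hk : k ≤ n) :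
    ∫ θ in (2 * k * Real.pi / (2 * n + 3))..(2 * (k + 1) * Real.pi / (2 * n + 3)),
        sawtooth n θ * Real.cos ((n + 3 / 2) * θ) * Real.cos (θ / 2) ≥
      2 * Real.pi / (3 * (2 * n + 3)) * Real.cos ((k + 1) * Real.pi / (2 * n + 3)) := by
  have hπ := Real.pi_pos
  have hN0 : (0:ℝ) < 2*(n:ℝ)+3 := by positivity
  set h : ℝ := 2*π/(2*(n:ℝ)+3) with hhdef
  have hh : 0 < h := by positivity
  have hknl : (k:ℝ) ≤ (n:ℝ) := Nat.cast_le.mpr hk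
  have ha : 2*(k:ℝ)*π/(2*(n:ℝ)+3) = (k:ℝ)*h := by rw [hhdef]; ring
  have hb : 2*((k:ℝ)+1)*π/(2*(n:ℝ)+3) = ((k:ℝ)+1)*h := by rw [hhdef]; ring
  rw [ge_iff_le, ha, hb]
  set C := Real.cos (((k:ℝ)+1)*π/(2*(n:ℝ)+3)) with hCdef
  have hab : (k:ℝ)*h ≤ ((k:ℝ)+1)*h := by nlinarith
  -- the right node angle is at most π/2
  have hbpi : ((k:ℝ)+1)*π/(2*(n:ℝ)+3) ≤ π/2 := by
    rw [div_le_div_iff₀ hN0 two_pos]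
    nlinarith
  have hC0 : 0 ≤ C := by
    rw [hCdef]
    apply Real.cos_nonneg_of_mem_Icc
    constructor
    · have : (0:ℝ) ≤ ((k:ℝ)+1)*π/(2*(n:ℝ)+3) := by positivity
      linarith
    · exact hbpi
  -- replace sawtooth by the linear function on the interval
  have hEq : Set.EqOn (fun θ => sawtooth n θ * Real.cos (((n:ℝ) + 3/2) * θ) * Real.cos (θ/2))
      (fun θ => (-1:ℝ)^k * (1 - 2*(θ/h - k)) * Real.cos (((n:ℝ) + 3/2) * θ) * Real.cos (θ/2))
      (Set.uIcc ((k:ℝ)*h) (((k:ℝ)+1)*h)) := by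
    intro θ hθ
    rw [Set.uIcc_of_le hab] at hθ
    simp only
    rw [sawtooth_eq n k hk hθ.1 hθ.2]
  have hcongr : (∫ θ in ((k:ℝ)*h)..(((k:ℝ)+1)*h),
        sawtooth n θ * Real.cos (((n:ℝ) + 3/2) * θ) * Real.cos (θ/2))
      = ∫ θ in ((k:ℝ)*h)..(((k:ℝ)+1)*h),
        (-1:ℝ)^k * (1 - 2*(θ/h - k)) * Real.cos (((n:ℝ) + 3/2) * θ) * Real.cos (θ/2) :=
    intervalIntegral.integral_congr hEq
  rw [hcongr]
  -- pointwise lower bound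
  have hGle : ∀ θ ∈ Set.Icc ((k:ℝ)*h) (((k:ℝ)+1)*h),
      C * (1 - 2*(θ/h - k))^2 ≤
        (-1:ℝ)^k * (1 - 2*(θ/h - k)) * Real.cos (((n:ℝ) + 3/2) * θ) * Real.cos (θ/2) := by
    intro θ hθ
    have ht0 : 0 ≤ θ/h - k := by
      rw [sub_nonneg, le_div_iff₀ hh]
      exact hθ.1
    have ht1 : θ/h - (k:ℝ) ≤ 1 := by
      rw [sub_le_iff_le_add, div_le_iff₀ hh]
      nlinarith [hθ.2]
    set t := θ/h - (k:ℝ) with htdef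
    have hθt : θ = (t + k) * h := by rw [htdef]; field_simp; ring
    have hcos : Real.cos (((n:ℝ)+3/2)*θ) = (-1:ℝ)^k * Real.cos (t*π) := by
      have harg : ((n:ℝ)+3/2)*θ = t*π + (k:ℤ)*π := by
        rw [hθt, hhdef]; push_cast; field_simp
      rw [harg, Real.cos_add_int_mul_pi]
      norm_num [zpow_natCast]
    have hkey : (1 - 2*t)^2 ≤ (1 - 2*t) * Real.cos (t*π) := saw_key ht0 ht1
    have hθ2a : 0 ≤ θ/2 := by nlinarith [hθ.1, hh.le, (Nat.cast_nonneg k : (0:ℝ) ≤ (k:ℝ))]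
    have hθ2b : θ/2 ≤ ((k:ℝ)+1)*π/(2*(n:ℝ)+3) := by
      have h2' : θ ≤ ((k:ℝ)+1) * (2*π) / (2*(n:ℝ)+3) := by
        have hE : ((k:ℝ)+1)*h = ((k:ℝ)+1)*(2*π)/(2*(n:ℝ)+3) := by rw [hhdef]; ring
        exact hθ.2.trans hE.le
      have h2'' := (le_div_iff₀ hN0).mp h2'
      rw [div_le_div_iff₀ two_pos hN0]
      nlinarith
    have hCle : C ≤ Real.cos (θ/2) := by
      rw [hCdef]
      apply Real.cos_le_cos_of_nonneg_of_le_pi hθ2a (by linarith) hθ2b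
    have hcosθ2 : 0 ≤ Real.cos (θ/2) := le_trans hC0 hCle
    have hpow : ((-1:ℝ)^k) * ((-1:ℝ)^k) = 1 := by
      rw [← pow_add]
      exact Even.neg_one_pow ⟨k, rfl⟩
    have hrw2 : (-1:ℝ)^k * (1 - 2*t) * ((-1:ℝ)^k * Real.cos (t*π)) * Real.cos (θ/2)
        = ((1 - 2*t) * Real.cos (t*π)) * Real.cos (θ/2) := by
      linear_combination ((1 - 2*t) * Real.cos (t*π) * Real.cos (θ/2)) * hpow
    rw [hcos, hrw2]
    nlinarith [mul_nonneg (sub_nonneg.mpr hCle) (sq_nonneg (1 - 2*t)),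
      mul_nonneg (sub_nonneg.mpr hkey) hcosθ2]
  -- integrability
  have hInt1 : IntervalIntegrable (fun θ : ℝ => C * (1 - 2*(θ/h - k))^2)
      MeasureTheory.volume ((k:ℝ)*h) (((k:ℝ)+1)*h) := by
    apply Continuous.intervalIntegrable; fun_prop
  have hInt2 : IntervalIntegrable
      (fun θ : ℝ => (-1:ℝ)^k * (1 - 2*(θ/h - k)) * Real.cos (((n:ℝ) + 3/2) * θ) * Real.cos (θ/2))
      MeasureTheory.volume ((k:ℝ)*h) (((k:ℝ)+1)*h) := by
    apply Continuous.intervalIntegrable; fun_prop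
  have hmono := intervalIntegral.integral_mono_on hab hInt1 hInt2 hGle
  have hGval : (∫ θ in ((k:ℝ)*h)..(((k:ℝ)+1)*h), C * (1 - 2*(θ/h - k))^2) = C * (h/3) := by
    rw [intervalIntegral.integral_const_mul, saw_integral_sq hh (k:ℝ)]
  rw [hGval] at hmono
  have hfin : 2*π/(3*(2*(n:ℝ)+3)) * C = C * (h/3) := by rw [hhdef]; field_simp
  rw [hfin]
  exact hmono
end
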